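/- Let A be an n×n Hermitian matrix with spectral decomposition A = U D U†, D = diag(λ_1,…,λ_n), and let A₊ = U D₊ U† where D₊ = diag(max{0,λ_i}). Then for any unitarily invariant norm |||·|||, A₊ minimizes |||A - X||| over all positive semidefinite X. -/

import Mathlib

open Matrix ComplexOrder

attribute [local instance] Classical.propDecidable

/-- Square root of a positive semidefinite matrix (junk value `0` otherwise). -/
noncomputable def psqrt {d : ℕ} (X : Matrix (Fin d) (Fin d) ℂ) : Matrix (Fin d) (Fin d) ℂ :=
  if h : X.PosSemidef then
    h.1.eigenvectorUnitary.1 * diagonal ((↑) ∘ (√·) ∘ h.1.eigenvalues) *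
      (star h.1.eigenvectorUnitary.1)
  else 0

/-- Schatten 1-norm (trace norm): `‖M‖₁ = Tr √(Mᴴ M)`. -/
noncomputable def traceNorm {d : ℕ} (M : Matrix (Fin d) (Fin d) ℂ) : ℝ :=
  (psqrt (Mᴴ * M)).trace.re

/-- Fidelity `F(X, σ) = Tr √(√σ X √σ)` of positive semidefinite matrices. -/
noncomputable def fid {d : ℕ} (X σ : Matrix (Fin d) (Fin d) ℂ) : ℝ :=
  (psqrt (psqrt σ * X * psqrt σ)).trace.re

lemma exists_unit_avg (z : ℂ) (hz : ‖z‖ ≤ 1) :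
    ∃ w₁ w₂ : ℂ, ‖w₁‖ = 1 ∧ ‖w₂‖ = 1 ∧ z = (w₁ + w₂) / 2 := by
  classical
  set r := ‖z‖ with hr
  set u : ℂ := if z = 0 then 1 else z / (r : ℂ) with hudef
  have hu : ‖u‖ = 1 := by
    by_cases h : z = 0
    · simp [hudef, h]
    · have : (r : ℂ) ≠ 0 := by
        simpa [hr] using norm_ne_zero_iff.mpr h
      rw [hudef, if_neg h, norm_div, Complex.norm_real, Real.norm_eq_abs,
        abs_of_nonneg (norm_nonneg z), ← hr, div_self (norm_ne_zero_iff.mpr h)]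
  have hzu : z = (r : ℂ) * u := by
    by_cases h : z = 0
    · simp [hudef, h, hr]
    · have hrne : (r : ℂ) ≠ 0 := by simpa [hr] using norm_ne_zero_iff.mpr h
      rw [hudef, if_neg h, mul_comm, div_mul_cancel₀]; exact hrne
  set s := Real.sqrt (1 - r ^ 2) with hs
  have hs2 : s ^ 2 = 1 - r ^ 2 := Real.sq_sqrt (by nlinarith [norm_nonneg z])
  have habs : ∀ t : ℝ, t ^ 2 = s ^ 2 → ‖(r : ℂ) + t * Complex.I‖ = 1 := by
    intro t ht
    rw [Complex.norm_add_mul_I, ht, hs2]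
    simp [add_sub_cancel]
  refine ⟨((r : ℂ) + s * Complex.I) * u, ((r : ℂ) + (-s : ℝ) * Complex.I) * u, ?_, ?_, ?_⟩
  · rw [norm_mul, hu, mul_one]; exact habs s rfl
  · rw [norm_mul, hu, mul_one]; exact habs (-s) (by ring)
  · rw [hzu]; push_cast; ring

lemma diag_unitary_mem {n : ℕ} (w : Fin n → ℂ) (hw : ∀ i, ‖w i‖ = 1) :
    Matrix.diagonal w ∈ Matrix.unitaryGroup (Fin n) ℂ := by
  rw [Matrix.mem_unitaryGroup_iff']
  rw [Matrix.star_eq_conjTranspose, Matrix.diagonal_conjTranspose,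
    Matrix.diagonal_mul_diagonal]
  have : ∀ i, star (w i) * w i = 1 := by
    intro i
    have h1 : Complex.normSq (w i) = ‖w i‖ ^ 2 := Complex.normSq_eq_norm_sq (w i)
    have h2 : ‖w i‖ = 1 := by exact hw i
    calc star (w i) * w i = (Complex.normSq (w i) : ℂ) := by
          rw [Complex.normSq_eq_conj_mul_self]; rfl
      _ = 1 := by rw [h1, h2]; norm_num
  simp only [Pi.star_apply] at *
  rw [show (fun i => star (w i) * w i) = fun _ => (1:ℂ) from funext this]
  exact Matrix.diagonal_one

lemma norm_diag_mul_le {n : ℕ} (N : Matrix (Fin n) (Fin n) ℂ → ℝ)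
    (hN_add : ∀ X Y, N (X + Y) ≤ N X + N Y)
    (hN_smul : ∀ (c : ℂ) (X), N (c • X) = ‖c‖ * N X)
    (hN_unitary : ∀ (X U V : Matrix (Fin n) (Fin n) ℂ),
      U ∈ Matrix.unitaryGroup (Fin n) ℂ → V ∈ Matrix.unitaryGroup (Fin n) ℂ →
      N (U * X * V) = N X)
    (a : Fin n → ℂ) (ha : ∀ i, ‖a i‖ ≤ 1) (M : Matrix (Fin n) (Fin n) ℂ) :
    N (Matrix.diagonal a * M) ≤ N M := by
  choose w₁ w₂ hw₁ hw₂ hsum using fun i => exists_unit_avg (a i) (ha i)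
  have hW₁ := diag_unitary_mem w₁ hw₁
  have hW₂ := diag_unitary_mem w₂ hw₂
  have hd : Matrix.diagonal a * M
      = (1/2 : ℂ) • (Matrix.diagonal w₁ * M + Matrix.diagonal w₂ * M) := by
    ext i j
    simp only [Matrix.smul_apply, Matrix.add_apply, Matrix.diagonal_mul, smul_eq_mul]
    rw [hsum i]; ring
  have h1 : N (Matrix.diagonal w₁ * M) = N M := by
    simpa using hN_unitary M (Matrix.diagonal w₁) 1 hW₁ (one_mem _)
  have h2 : N (Matrix.diagonal w₂ * M) = N M := by
    simpa using hN_unitary M (Matrix.diagonal w₂) 1 hW₂ (one_mem _)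
  rw [hd, hN_smul]
  have := hN_add (Matrix.diagonal w₁ * M) (Matrix.diagonal w₂ * M)
  rw [h1, h2] at this
  simp only [one_div, norm_inv, Complex.norm_ofNat]
  nlinarith [this]

lemma norm_pinch_le {n : ℕ} (N : Matrix (Fin n) (Fin n) ℂ → ℝ)
    (hN_add : ∀ X Y, N (X + Y) ≤ N X + N Y)
    (hN_smul : ∀ (c : ℂ) (X), N (c • X) = ‖c‖ * N X)
    (hN_unitary : ∀ (X U V : Matrix (Fin n) (Fin n) ℂ),
      U ∈ Matrix.unitaryGroup (Fin n) ℂ → V ∈ Matrix.unitaryGroup (Fin n) ℂ →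
      N (U * X * V) = N X)
    (M : Matrix (Fin n) (Fin n) ℂ) :
    N (Matrix.diagonal (fun i => M i i)) ≤ N M := by
  classical
  have key : ∀ s : Finset (Fin n),
      N (Matrix.of fun i j => if i = j ∨ (i ∉ s ∧ j ∉ s) then M i j else 0) ≤ N M := by
    intro s
    induction s using Finset.induction with
    | empty =>
      have : (Matrix.of fun i j => if i = j ∨ (i ∉ (∅ : Finset (Fin n)) ∧ j ∉ (∅ : Finset (Fin n)))
          then M i j else 0) = M := by
        ext i j; simp
      rw [this]
    | @insert k s hk ih =>
      set P : Matrix (Fin n) (Fin n) ℂ :=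
        Matrix.of fun i j => if i = j ∨ (i ∉ s ∧ j ∉ s) then M i j else 0 with hP
      set u : Fin n → ℂ := fun i => if i = k then (-1 : ℂ) else 1 with hu
      have hUmem : Matrix.diagonal u ∈ Matrix.unitaryGroup (Fin n) ℂ :=
        diag_unitary_mem u (by intro i; by_cases h : i = k <;> simp [hu, h])
      have hdec : (Matrix.of fun i j => if i = j ∨ (i ∉ insert k s ∧ j ∉ insert k s)
            then M i j else 0)
          = (1/2 : ℂ) • (P + Matrix.diagonal u * P * Matrix.diagonal u) := by
        ext i j
        simp only [Matrix.smul_apply, Matrix.add_apply, Matrix.mul_diagonal,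
          Matrix.diagonal_mul, Matrix.of_apply, smul_eq_mul, hP, hu]
        by_cases hij : i = j
        · subst hij
          by_cases hik : i = k <;> simp [hik] <;> ring
        · by_cases hik : i = k
          · have hjk : ¬ j = k := fun h => hij (hik.trans h.symm)
            have hkj : ¬ k = j := fun h => hjk h.symm
            simp [hij, hik, hjk, hkj, Finset.mem_insert]
            try split_ifs <;> ring
          · by_cases hjk : j = k
            · have hki : ¬ k = i := fun h => hik h.symm
              simp [hij, hik, hjk, hki, Finset.mem_insert, fun h : i = k => hik h]
              try split_ifs <;> ring
            · simp only [hij, hik, hjk, Finset.mem_insert, false_or, if_neg, not_or]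
              by_cases hmem : i ∉ s ∧ j ∉ s
              · simp [hmem, hik, hjk]; ring
              · simp [hmem, hik, hjk]
                try (intro h1 h2; exact absurd ⟨h1, h2⟩ hmem)
      rw [hdec, hN_smul]
      have h2 : N (Matrix.diagonal u * P * Matrix.diagonal u) = N P :=
        hN_unitary P _ _ hUmem hUmem
      have h3 := hN_add P (Matrix.diagonal u * P * Matrix.diagonal u)
      rw [h2] at h3
      simp only [one_div, norm_inv, Complex.norm_ofNat]
      nlinarith [ih]
  have h := key Finset.univ
  have heq : (Matrix.of fun i j => if i = j ∨ (i ∉ (Finset.univ : Finset (Fin n)) ∧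
      j ∉ (Finset.univ : Finset (Fin n))) then M i j else 0)
      = Matrix.diagonal (fun i => M i i) := by
    ext i j
    by_cases hij : i = j
    · subst hij; simp
    · simp [hij, Matrix.diagonal_apply_ne _ hij]
  rwa [heq] at h

theorem positive_part_closest_psd {n : ℕ} (A : Matrix (Fin n) (Fin n) ℂ)
    (hA : A.IsHermitian)
    (N : Matrix (Fin n) (Fin n) ℂ → ℝ)
    (hN_nonneg : ∀ X, 0 ≤ N X)
    (hN_add : ∀ X Y, N (X + Y) ≤ N X + N Y)
    (hN_smul : ∀ (c : ℂ) (X), N (c • X) = ‖c‖ * N X)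
    (hN_unitary : ∀ (X U V : Matrix (Fin n) (Fin n) ℂ),
      U ∈ Matrix.unitaryGroup (Fin n) ℂ → V ∈ Matrix.unitaryGroup (Fin n) ℂ →
      N (U * X * V) = N X)
    (X : Matrix (Fin n) (Fin n) ℂ) (hX : X.PosSemidef) :
    N (A - hA.cfc (fun x => max 0 x)) ≤ N (A - X) := by
  classical
  set U : Matrix (Fin n) (Fin n) ℂ :=
    (Matrix.IsHermitian.eigenvectorUnitary hA : Matrix (Fin n) (Fin n) ℂ) with hUdef
  have hU : U ∈ Matrix.unitaryGroup (Fin n) ℂ := (Matrix.IsHermitian.eigenvectorUnitary hA).2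
  have hU' : star U ∈ Matrix.unitaryGroup (Fin n) ℂ := Unitary.star_mem hU
  have hUU' : U * star U = 1 := Matrix.mem_unitaryGroup_iff.mp hU
  have hU'U : star U * U = 1 := Matrix.mem_unitaryGroup_iff'.mp hU
  set lam : Fin n → ℝ := hA.eigenvalues with hlam
  set D : Matrix (Fin n) (Fin n) ℂ := Matrix.diagonal (fun i => (lam i : ℂ)) with hD
  -- the matrix to approximate, conjugated
  set Y : Matrix (Fin n) (Fin n) ℂ := star U * X * U with hY
  have hYps : Y.PosSemidef := by
    have h := hX.conjTranspose_mul_mul_same (B := U)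
    rwa [← Matrix.star_eq_conjTranspose] at h
  -- spectral theorem
  have hspec : A = U * D * star U := by
    have := hA.spectral_theorem
    rw [Unitary.conjStarAlgAut_apply] at this
    exact this
  -- diag entries of Y
  set r : Fin n → ℝ := fun i => (Y i i).re with hr
  have hYdiag : ∀ i, Y i i = (r i : ℂ) ∧ 0 ≤ r i := by
    intro i
    have h0 : 0 ≤ Y i i := by
      exact hYps.diag_nonneg
    rw [Complex.nonneg_iff] at h0
    constructor
    · exact (Complex.ext (by simp [hr]) (by simp [hr, ← h0.2])).symm
    · exact h0.1
  -- the positive part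
  have hcfc : hA.cfc (fun x => max 0 x)
      = U * Matrix.diagonal (fun i => ((max 0 (lam i) : ℝ) : ℂ)) * star U := by
    rw [Matrix.IsHermitian.cfc]
    rfl
  set m : Fin n → ℂ := fun i => ((min (lam i) 0 : ℝ) : ℂ) with hm
  have hfun : (fun i => ((lam i : ℂ) - ((max 0 (lam i) : ℝ) : ℂ))) = m := by
    funext i
    simp only [hm]
    have hre : lam i - max 0 (lam i) = min (lam i) 0 := by
      rcases le_total (lam i) 0 with h | h
      · rw [max_eq_left h, min_eq_left h, sub_zero]
      · rw [max_eq_right h, min_eq_right h, sub_self]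
    push_cast [← hre]
    ring
  have hAsub : A - hA.cfc (fun x => max 0 x) = U * Matrix.diagonal m * star U := by
    rw [hcfc]
    conv_lhs => rw [hspec]
    rw [← Matrix.sub_mul, ← Matrix.mul_sub, hD, Matrix.diagonal_sub, hfun]
  have hLHS : N (A - hA.cfc (fun x => max 0 x)) = N (Matrix.diagonal m) := by
    rw [hAsub]; exact hN_unitary _ U (star U) hU hU'
  -- conjugate the RHS
  have hRHS : N (A - X) = N (D - Y) := by
    have h1 : star U * (A - X) * U = D - Y := by
      rw [Matrix.mul_sub, Matrix.sub_mul, hY]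
      congr 1
      rw [hspec]
      calc star U * (U * D * star U) * U = (star U * U) * D * (star U * U) := by
            noncomm_ring
        _ = D := by rw [hU'U]; simp
    rw [← h1]
    exact (hN_unitary _ (star U) U hU' hU).symm
  rw [hLHS, hRHS]
  -- now the pinching argument
  have hpinch : N (Matrix.diagonal (fun i => (D - Y) i i)) ≤ N (D - Y) :=
    norm_pinch_le N hN_add hN_smul hN_unitary (D - Y)
  -- diagonal entries of D - Y
  set mu : Fin n → ℝ := fun i => lam i - r i with hmu
  have hDYdiag : ∀ i, (D - Y) i i = (mu i : ℂ) := by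
    intro i
    rw [Matrix.sub_apply, hD, Matrix.diagonal_apply_eq, (hYdiag i).1, hmu]
    push_cast
    ring
  -- the contraction coefficients
  set a : Fin n → ℂ := fun i => ((if mu i = 0 then 0 else min (lam i) 0 / mu i : ℝ) : ℂ) with ha
  have hbound : ∀ i, ‖a i‖ ≤ 1 := by
    intro i
    rw [ha]
    simp only [Complex.norm_real, Real.norm_eq_abs]
    split_ifs with h
    · simp
    · rw [abs_div, div_le_one (abs_pos.mpr h)]
      rcases le_or_gt 0 (lam i) with hl | hl
      · rw [min_eq_right hl]
        simp [abs_nonneg]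
      · have hrpos := (hYdiag i).2
        have hmui : mu i = lam i - r i := rfl
        have hmuneg : mu i < 0 := by rw [hmui]; linarith
        rw [min_eq_left hl.le, abs_of_neg hl, abs_of_neg hmuneg, hmui]
        linarith
  have hfun2 : (fun i => a i * (D - Y) i i) = m := by
    funext i
    rw [hDYdiag i, hm]
    show ((if mu i = 0 then (0:ℝ) else min (lam i) 0 / mu i : ℝ) : ℂ) * ((mu i : ℝ) : ℂ)
      = ((min (lam i) 0 : ℝ) : ℂ)
    by_cases h : mu i = 0
    · have hmui : mu i = lam i - r i := rfl
      have hrpos := (hYdiag i).2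
      have hl : 0 ≤ lam i := by rw [hmui] at h; linarith
      rw [if_pos h, min_eq_right hl]
      simp
    · rw [if_neg h]
      push_cast
      rw [div_mul_cancel₀]
      exact_mod_cast fun hc => h (by exact_mod_cast hc)
  have hprod : Matrix.diagonal a * Matrix.diagonal (fun i => (D - Y) i i)
      = Matrix.diagonal m := by
    rw [Matrix.diagonal_mul_diagonal, hfun2]
  calc N (Matrix.diagonal m)
      = N (Matrix.diagonal a * Matrix.diagonal (fun i => (D - Y) i i)) := by rw [hprod]
    _ ≤ N (Matrix.diagonal (fun i => (D - Y) i i)) :=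
        norm_diag_mul_le N hN_add hN_smul hN_unitary a hbound _
    _ ≤ N (D - Y) := hpinch
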